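/- Let (V, ⟨−,−⟩, s) be a Serre lattice over ℚ of surface* type with structure element o. Let (v, w) be an exceptional pair (⟨v,v⟩ = ⟨w,w⟩ = 1 and ⟨w,v⟩ = 0) with r(v) > 0 and r(w) > 0, set h := ⟨v, w⟩ and u := (1/r(w))·w − (1/r(v))·v. If ⟨u, u⟩ = 0 and ⟨u, (s−1)o⟩ > 0, then |r(w) − h·r(v)| < r(w), or |r(v) − h·r(w)| < r(v), or else h = 2 and r(v) = r(w). -/

import Mathlib

/-- degenerate rank reduction: with notation as in Rudakov's lemma, if
`⟨u,u⟩ = 0` and `⟨u,(s−1)o⟩ > 0`, then `|r(w) − h·r(v)| < r(w)`, or `|r(v) − h·r(w)| < r(v)`,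
or else `h = 2` and `r(v) = r(w)`. -/
theorem rank_reduction_degenerate (V : Type*) [AddCommGroup V] [Module ℚ V]
    [FiniteDimensional ℚ V]
    (B : V →ₗ[ℚ] V →ₗ[ℚ] ℚ) (hB : ∀ v, (∀ w, B v w = 0) → v = 0)
    (s : V →ₗ[ℚ] V) (hbij : Function.Bijective s)
    (hserre : ∀ v w, B v (s w) = B w v)
    (huni : (s - 1) ^ Module.finrank ℚ V = 0)
    (hrank : Module.finrank ℚ (LinearMap.range (s - 1)) ≤ 2)
    (hstar : (s - 1) ^ 2 ≠ 0)
    (o : V) (ho : IsCompl (Submodule.span ℚ {o}) (LinearMap.ker ((s - 1) ^ 2)))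
    (v w v₁ w₁ : V) (rv rw : ℚ)
    (hv₁ : v₁ ∈ LinearMap.ker ((s - 1) ^ 2)) (hw₁ : w₁ ∈ LinearMap.ker ((s - 1) ^ 2))
    (hv : v = rv • o + v₁) (hw : w = rw • o + w₁)
    (hrv : 0 < rv) (hrw : 0 < rw)
    (hvv : B v v = 1) (hww : B w w = 1) (hwv : B w v = 0)
    (u : V) (hu : u = rw⁻¹ • w - rv⁻¹ • v)
    (huu : B u u = 0) (huω : 0 < B u ((s - 1) o)) :
    |rw - B v w * rv| < rw ∨ |rv - B v w * rw| < rv ∨ (B v w = 2 ∧ rv = rw) := by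
  have e : B u u = rw⁻¹ * (rw⁻¹ * B w w) - rw⁻¹ * (rv⁻¹ * B w v)
      - rv⁻¹ * (rw⁻¹ * B v w) + rv⁻¹ * (rv⁻¹ * B v v) := by
    rw [hu]
    simp [map_sub, map_smul, smul_eq_mul]
    ring
  rw [huu, hvv, hww, hwv] at e
  have hrv' := hrv.ne'
  have hrw' := hrw.ne'
  have key : rv ^ 2 + rw ^ 2 = B v w * (rv * rw) := by
    have h2 : (rv * rw) * (rv ^ 2 + rw ^ 2 - B v w * (rv * rw)) = 0 := by
      field_simp at e
      linear_combination -(rv * rw) * e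
    rcases mul_eq_zero.mp h2 with h3 | h3
    · exact absurd h3 (by positivity)
    · linarith
  rcases lt_trichotomy rv rw with h | h | h
  · left
    have h1 : rw - B v w * rv = -(rv ^ 2 / rw) := by
      field_simp
      nlinarith [key]
    rw [h1, abs_neg, abs_of_pos (by positivity)]
    rw [div_lt_iff₀ hrw]
    nlinarith
  · right; right
    constructor
    · subst h
      have h2 : B v w * (rv * rv) = 2 * (rv * rv) := by linear_combination -key
      exact mul_right_cancel₀ (by positivity) h2
    · exact h
  · right; left
    have h1 : rv - B v w * rw = -(rw ^ 2 / rv) := by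
      field_simp
      nlinarith [key]
    rw [h1, abs_neg, abs_of_pos (by positivity)]
    rw [div_lt_iff₀ hrv]
    nlinarith
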